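/- Let n ≥ 1 be an integer and θ a real number with 0 ≤ θ ≤ π. Then √(sin θ) · |P_n(cos θ)| < √(2/(π n)). -/

import Mathlib

open Polynomial Real Filter Topology

/-- The Legendre polynomials: `P_0(t) = 1`, `P_1(t) = t` and
`(n+1)·P_{n+1}(t) = (2n+1)·t·P_n(t) − n·P_{n−1}(t)` for `n ≥ 1`. -/
noncomputable def P : ℕ → ℝ → ℝ
  | 0 => fun _ => 1
  | 1 => fun t => t
  | n + 2 => fun t =>
      ((2 * (n : ℝ) + 3) * t * P (n + 1) t - ((n : ℝ) + 1) * P n t) / ((n : ℝ) + 2)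

namespace Bern

noncomputable def L : ℕ → Polynomial ℝ
  | 0 => 1
  | 1 => Polynomial.X
  | n + 2 => Polynomial.C (((n : ℝ) + 2)⁻¹) *
      ((2 * (n : Polynomial ℝ) + 3) * Polynomial.X * L (n + 1) - ((n : Polynomial ℝ) + 1) * L n)

lemma natCast_add_two_eq_C (n : ℕ) : (n : Polynomial ℝ) + 2 = Polynomial.C ((n : ℝ) + 2) := by
  rw [map_add, C_eq_natCast, map_ofNat]

lemma L_rec (n : ℕ) : ((n : Polynomial ℝ) + 2) * L (n + 2)
    = (2 * (n : Polynomial ℝ) + 3) * X * L (n + 1) - ((n : Polynomial ℝ) + 1) * L n := by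
  show ((n : Polynomial ℝ) + 2) * (Polynomial.C (((n : ℝ) + 2)⁻¹) * _) = _
  rw [natCast_add_two_eq_C, ← mul_assoc, ← C_mul, mul_inv_cancel₀ (by positivity), C_1, one_mul]

lemma L_BC (n : ℕ) :
    derivative (L (n + 1)) = X * derivative (L n) + ((n : Polynomial ℝ) + 1) * L n ∧
    derivative (L n) = X * derivative (L (n + 1)) - ((n : Polynomial ℝ) + 1) * L (n + 1) := by
  induction n with
  | zero => constructor <;> simp [L]
  | succ n ih =>
    obtain ⟨hB, hC⟩ := ih
    have hrec := L_rec n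
    have hrec' := congrArg derivative hrec
    simp only [derivative_mul, derivative_add, derivative_sub, derivative_X, derivative_natCast,
      derivative_ofNat, derivative_one, zero_mul, mul_one, one_mul, zero_add, add_zero,
      mul_zero, zero_sub, sub_zero] at hrec'
    have h2 : ((n : Polynomial ℝ) + 2) ≠ 0 := by
      rw [natCast_add_two_eq_C, Ne, C_eq_zero]; positivity
    constructor
    · apply mul_left_cancel₀ h2
      push_cast
      linear_combination hrec' - ((n : Polynomial ℝ) + 1) * hC
    · apply mul_left_cancel₀ h2
      push_cast
      linear_combination ((n : Polynomial ℝ) + 2) * hrec - X * hrec'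
        + ((n : Polynomial ℝ) + 2) * hB + (2 * (n : Polynomial ℝ) + 3) * X * hC

lemma L_E (n : ℕ) : (1 - X ^ 2) * derivative (L (n + 1))
    = ((n : Polynomial ℝ) + 1) * (L n - X * L (n + 1)) := by
  obtain ⟨hB, hC⟩ := L_BC n
  linear_combination hB + X * hC

lemma L_ODE (n : ℕ) : (1 - X ^ 2) * derivative (derivative (L n))
    - 2 * X * derivative (L n) + (n : Polynomial ℝ) * ((n : Polynomial ℝ) + 1) * L n = 0 := by
  cases n with
  | zero => simp [L]
  | succ n =>
    have hE := congrArg derivative (L_E n)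
    simp only [derivative_mul, derivative_add, derivative_sub, derivative_one, derivative_X,
      derivative_pow, derivative_natCast, C_eq_natCast, Nat.cast_ofNat, map_ofNat, zero_mul,
      mul_one, one_mul, zero_add, add_zero, mul_zero, zero_sub, sub_zero, pow_one] at hE
    obtain ⟨hB, hC⟩ := L_BC n
    push_cast
    linear_combination hE + ((n : Polynomial ℝ) + 1) * hC

lemma ode_eval (n : ℕ) (t : ℝ) :
    (1 - t ^ 2) * (derivative (derivative (L n))).eval t
      - 2 * t * (derivative (L n)).eval t + n * (n + 1) * (L n).eval t = 0 := by
  have h := congrArg (Polynomial.eval t) (L_ODE n)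
  simpa using h

lemma L_rec_eval (n : ℕ) (t : ℝ) : ((n : ℝ) + 2) * (L (n + 2)).eval t
    = (2 * (n : ℝ) + 3) * t * (L (n + 1)).eval t - ((n : ℝ) + 1) * (L n).eval t := by
  have h := congrArg (Polynomial.eval t) (L_rec n)
  simpa using h

lemma P_eq_aux (n : ℕ) : (∀ t, P n t = (L n).eval t) ∧ (∀ t, P (n + 1) t = (L (n + 1)).eval t) := by
  induction n with
  | zero => exact ⟨fun t => by simp [P, L], fun t => by simp [P, L]⟩
  | succ n ih =>
    obtain ⟨h0, h1⟩ := ih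
    refine ⟨h1, fun t => ?_⟩
    show ((2 * (n : ℝ) + 3) * t * P (n + 1) t - ((n : ℝ) + 1) * P n t) / ((n : ℝ) + 2)
      = (L (n + 2)).eval t
    rw [h0, h1, eq_comm, eq_div_iff (by positivity : ((n : ℝ) + 2) ≠ 0)]
    linear_combination L_rec_eval n t

lemma P_eq (n : ℕ) (t : ℝ) : P n t = (L n).eval t := (P_eq_aux n).1 t

noncomputable def a (n : ℕ) : ℝ := (L n).eval 0
noncomputable def b (n : ℕ) : ℝ := (derivative (L n)).eval 0

noncomputable def c : ℕ → ℝ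
  | 0 => 1
  | m + 1 => c m * (2 * m + 1) / (2 * m + 2)

lemma c_zero : c 0 = 1 := rfl
lemma c_succ (m : ℕ) : c (m + 1) = c m * (2 * m + 1) / (2 * m + 2) := rfl

lemma c_pos (m : ℕ) : 0 < c m := by
  induction m with
  | zero => rw [c_zero]; norm_num
  | succ m ih => rw [c_succ]; positivity

lemma a_rec (n : ℕ) : ((n : ℝ) + 2) * a (n + 2) = -(((n : ℝ) + 1) * a n) := by
  have h := L_rec_eval n 0
  simp only [mul_zero, zero_mul] at h
  simpa [a] using h

lemma a_even (m : ℕ) : a (2 * m) = (-1) ^ m * c m := by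
  induction m with
  | zero => simp [a, L, c_zero]
  | succ m ih =>
    have h := a_rec (2 * m)
    have h2 : ((2 * m : ℕ) : ℝ) + 2 ≠ 0 := by positivity
    rw [show 2 * (m + 1) = 2 * m + 2 by ring]
    have ha : a (2 * m + 2) = -(((2 * m : ℕ) : ℝ) + 1) * a (2 * m) / (((2 * m : ℕ) : ℝ) + 2) := by
      rw [eq_div_iff h2]; linear_combination h
    rw [ha, ih, c_succ]
    push_cast
    field_simp
    ring

lemma a_odd (m : ℕ) : a (2 * m + 1) = 0 := by
  induction m with
  | zero => simp [a, L]
  | succ m ih =>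
    have h := a_rec (2 * m + 1)
    have h2 : ((2 * m + 1 : ℕ) : ℝ) + 2 ≠ 0 := by positivity
    rw [show 2 * (m + 1) + 1 = 2 * m + 1 + 2 by ring]
    rw [ih, mul_zero, neg_zero] at h
    exact (mul_eq_zero.mp h).resolve_left h2

lemma b_succ (n : ℕ) : b (n + 1) = ((n : ℝ) + 1) * a n := by
  have h := congrArg (Polynomial.eval (0 : ℝ)) (L_BC n).1
  simpa [a, b] using h

lemma c_sq_W (m : ℕ) : c m ^ 2 * (2 * m + 1) * Real.Wallis.W m = 1 := by
  induction m with
  | zero => simp [c_zero, Real.Wallis.W]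
  | succ m ih =>
    have h1 : (2 * (m : ℝ) + 1) ≠ 0 := by positivity
    have h2 : (2 * (m : ℝ) + 2) ≠ 0 := by positivity
    have h3 : (2 * (m : ℝ) + 3) ≠ 0 := by positivity
    have key : c (m + 1) ^ 2 * (2 * (m + 1 : ℕ) + 1) * Real.Wallis.W (m + 1)
        = c m ^ 2 * (2 * m + 1) * Real.Wallis.W m := by
      rw [Real.Wallis.W_succ, c_succ]
      push_cast
      field_simp
      ring
    rw [key, ih]

lemma c_sq_tendsto : Tendsto (fun m : ℕ => c m ^ 2 * (2 * m + 1)) atTop (𝓝 (2 / π)) := by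
  have h1 : ∀ m : ℕ, c m ^ 2 * (2 * m + 1) = (Real.Wallis.W m)⁻¹ := by
    intro m
    have := c_sq_W m
    have hW := Real.Wallis.W_pos m
    field_simp
    linear_combination this
  simp_rw [h1]
  have := (Real.Wallis.tendsto_W_nhds_pi_div_two).inv₀ (by positivity)
  rw [show (2 : ℝ) / π = (π / 2)⁻¹ by rw [inv_div]]
  exact this

lemma c_sq_to_zero : Tendsto (fun m : ℕ => c m ^ 2) atTop (𝓝 0) := by
  have h2 : Tendsto (fun m : ℕ => (2 * (m : ℝ) + 1)⁻¹) atTop (𝓝 0) := by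
    apply Tendsto.inv_tendsto_atTop
    apply Filter.Tendsto.atTop_add _ tendsto_const_nhds
    exact (tendsto_natCast_atTop_atTop).const_mul_atTop two_pos
  have := c_sq_tendsto.mul h2
  rw [mul_zero] at this
  convert this using 2 with m
  have : (2 * (m : ℝ) + 1) ≠ 0 := by positivity
  field_simp

noncomputable def d (m : ℕ) : ℝ := c m ^ 2 * (m + 1 / 4)

lemma d_tendsto : Tendsto d atTop (𝓝 (1 / π)) := by
  have h : d = fun m : ℕ => c m ^ 2 * (2 * m + 1) / 2 - c m ^ 2 / 4 := by
    funext m; unfold d; ring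
  rw [h]
  have h2 := (c_sq_tendsto.div_const 2).sub (c_sq_to_zero.div_const 4)
  have : (2 : ℝ) / π / 2 - 0 / 4 = 1 / π := by ring
  rwa [this] at h2

lemma d_strictMono : StrictMono d := by
  apply strictMono_nat_of_lt_succ
  intro m
  unfold d
  rw [c_succ]
  have h2 : (2 * (m : ℝ) + 2) ≠ 0 := by positivity
  rw [div_pow, div_mul_eq_mul_div, lt_div_iff₀ (by positivity)]
  push_cast
  nlinarith [pow_pos (c_pos m) 2]

lemma c_sq_lt (m : ℕ) : c m ^ 2 * ((m : ℝ) + 1 / 4) < 1 / π := by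
  have h1 : d (m + 1) ≤ 1 / π := d_strictMono.monotone.ge_of_tendsto d_tendsto (m + 1)
  exact lt_of_lt_of_le (d_strictMono (Nat.lt_succ_self m)) h1

noncomputable def u (n : ℕ) (x : ℝ) : ℝ := (L n).eval (Real.cos x)
noncomputable def u1 (n : ℕ) (x : ℝ) : ℝ := -Real.sin x * (derivative (L n)).eval (Real.cos x)
noncomputable def v (n : ℕ) (x : ℝ) : ℝ := Real.sqrt (Real.sin x) * u n x
noncomputable def v1 (n : ℕ) (x : ℝ) : ℝ :=
  Real.cos x / (2 * Real.sqrt (Real.sin x)) * u n x + Real.sqrt (Real.sin x) * u1 n x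
noncomputable def q (n : ℕ) (x : ℝ) : ℝ :=
  n * (n + 1) + 1 / 4 + 1 / (4 * Real.sin x ^ 2)
noncomputable def E (n : ℕ) (x : ℝ) : ℝ := v n x ^ 2 + v1 n x ^ 2 / q n x

lemma q_pos (n : ℕ) (x : ℝ) : 0 < q n x := by
  unfold q
  have h1 : 0 ≤ (n : ℝ) * (n + 1) := by positivity
  have h2 : 0 ≤ 1 / (4 * Real.sin x ^ 2) := by positivity
  linarith

lemma hasDerivAt_u (n : ℕ) (x : ℝ) : HasDerivAt (u n) (u1 n x) x := by
  have h := ((L n).hasDerivAt (Real.cos x)).comp x (Real.hasDerivAt_cos x)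
  exact h.congr_deriv (by simp [u1, mul_comm])

lemma hasDerivAt_sqrtsin {x : ℝ} (hs : 0 < Real.sin x) :
    HasDerivAt (fun y => Real.sqrt (Real.sin y)) (Real.cos x / (2 * Real.sqrt (Real.sin x))) x := by
  have h := (Real.hasDerivAt_sqrt hs.ne').comp x (Real.hasDerivAt_sin x)
  refine h.congr_deriv ?_
  ring

lemma hasDerivAt_v (n : ℕ) {x : ℝ} (hs : 0 < Real.sin x) : HasDerivAt (v n) (v1 n x) x := by
  have h := (hasDerivAt_sqrtsin hs).mul (hasDerivAt_u n x)
  exact h.congr_deriv (by simp [v1])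

lemma hasDerivAt_u1 (n : ℕ) (x : ℝ) :
    HasDerivAt (u1 n) (-Real.cos x * (derivative (L n)).eval (Real.cos x)
      + Real.sin x ^ 2 * (derivative (derivative (L n))).eval (Real.cos x)) x := by
  have h2 := ((derivative (L n)).hasDerivAt (Real.cos x)).comp x (Real.hasDerivAt_cos x)
  have h := ((Real.hasDerivAt_sin x).neg).mul h2
  simp only [Function.comp_def] at h
  refine h.congr_deriv ?_
  simp only [Pi.neg_apply]
  ring

lemma hasDerivAt_v1 (n : ℕ) {x : ℝ} (hs : 0 < Real.sin x) :
    HasDerivAt (v1 n) (-q n x * v n x) x := by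
  set g := Real.sqrt (Real.sin x) with hgdef
  have hgpos : 0 < g := Real.sqrt_pos.mpr hs
  have hg : g ^ 2 = Real.sin x := Real.sq_sqrt hs.le
  have hden : (2 : ℝ) * g ≠ 0 := by positivity
  have hf1 : HasDerivAt (fun y => Real.cos y / (2 * Real.sqrt (Real.sin y)))
      ((-Real.sin x * (2 * g) - Real.cos x * (2 * (Real.cos x / (2 * g)))) / (2 * g) ^ 2) x :=
    (Real.hasDerivAt_cos x).div ((hasDerivAt_sqrtsin hs).const_mul 2) hden
  have h := (hf1.mul (hasDerivAt_u n x)).add ((hasDerivAt_sqrtsin hs).mul (hasDerivAt_u1 n x))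
  refine h.congr_deriv ?_
  unfold v u u1 q
  set e0 := (L n).eval (Real.cos x)
  set e1 := (derivative (L n)).eval (Real.cos x)
  set e2 := (derivative (derivative (L n))).eval (Real.cos x)
  have pyth : (g ^ 2) ^ 2 = 1 - Real.cos x ^ 2 := by
    rw [hg]; nlinarith [Real.sin_sq_add_cos_sq x]
  have he2 : (g ^ 2) ^ 2 * e2 = 2 * Real.cos x * e1 - (n : ℝ) * ((n : ℝ) + 1) * e0 := by
    have hode := ode_eval n (Real.cos x)
    linear_combination hode + e2 * pyth
  rw [← hgdef, ← hg]
  field_simp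
  linear_combination 16 * g ^ 4 * he2 - 4 * e0 * pyth

lemma hasDerivAt_q (n : ℕ) {x : ℝ} (hs : 0 < Real.sin x) :
    HasDerivAt (q n) (-Real.cos x / (2 * Real.sin x ^ 3)) x := by
  have hden : HasDerivAt (fun y => 4 * Real.sin y ^ 2)
      (4 * (2 * Real.sin x ^ 1 * Real.cos x)) x := ((Real.hasDerivAt_sin x).pow 2).const_mul 4
  have hne : 4 * Real.sin x ^ 2 ≠ 0 := by positivity
  have h := ((hasDerivAt_const x (1 : ℝ)).div hden hne).const_add ((n : ℝ) * (n + 1) + 1 / 4)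
  refine h.congr_deriv ?_
  field_simp
  ring

lemma hasDerivAt_E (n : ℕ) {x : ℝ} (hs : 0 < Real.sin x) :
    HasDerivAt (E n) (Real.cos x * v1 n x ^ 2 / (2 * Real.sin x ^ 3 * q n x ^ 2)) x := by
  have hq := q_pos n x
  have h := ((hasDerivAt_v n hs).pow 2).add
    (((hasDerivAt_v1 n hs).pow 2).div (hasDerivAt_q n hs) hq.ne')
  refine h.congr_deriv ?_
  simp only [Pi.pow_apply]
  field_simp
  ring

lemma E_le (n : ℕ) {θ : ℝ} (h1 : 0 < θ) (h2 : θ < Real.pi) : E n θ ≤ E n (Real.pi / 2) := by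
  rcases le_or_gt θ (Real.pi / 2) with hle | hlt
  · have mono : MonotoneOn (E n) (Set.Icc θ (Real.pi / 2)) := by
      apply monotoneOn_of_deriv_nonneg (convex_Icc _ _)
      · intro x hx
        have hsx : 0 < Real.sin x := Real.sin_pos_of_pos_of_lt_pi (lt_of_lt_of_le h1 hx.1)
          (lt_of_le_of_lt hx.2 (by linarith [Real.pi_pos]))
        exact (hasDerivAt_E n hsx).continuousAt.continuousWithinAt
      · rw [interior_Icc]
        intro x hx
        have hsx : 0 < Real.sin x := Real.sin_pos_of_pos_of_lt_pi (lt_trans h1 hx.1)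
          (lt_trans hx.2 (by linarith [Real.pi_pos]))
        exact (hasDerivAt_E n hsx).differentiableAt.differentiableWithinAt
      · rw [interior_Icc]
        intro x hx
        have hsx : 0 < Real.sin x := Real.sin_pos_of_pos_of_lt_pi (lt_trans h1 hx.1)
          (lt_trans hx.2 (by linarith [Real.pi_pos]))
        rw [(hasDerivAt_E n hsx).deriv]
        have hc : 0 ≤ Real.cos x := Real.cos_nonneg_of_mem_Icc
          ⟨by linarith [hx.1, Real.pi_pos], hx.2.le⟩
        positivity
    exact mono (Set.mem_Icc.mpr ⟨le_refl _, hle⟩)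
      (Set.mem_Icc.mpr ⟨hle, le_refl _⟩) hle
  · have anti : AntitoneOn (E n) (Set.Icc (Real.pi / 2) θ) := by
      apply antitoneOn_of_deriv_nonpos (convex_Icc _ _)
      · intro x hx
        have hsx : 0 < Real.sin x := Real.sin_pos_of_pos_of_lt_pi
          (lt_of_lt_of_le (by linarith [Real.pi_pos]) hx.1) (lt_of_le_of_lt hx.2 h2)
        exact (hasDerivAt_E n hsx).continuousAt.continuousWithinAt
      · rw [interior_Icc]
        intro x hx
        have hsx : 0 < Real.sin x := Real.sin_pos_of_pos_of_lt_pi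
          (lt_trans (by linarith [Real.pi_pos]) hx.1) (lt_trans hx.2 h2)
        exact (hasDerivAt_E n hsx).differentiableAt.differentiableWithinAt
      · rw [interior_Icc]
        intro x hx
        have hsx : 0 < Real.sin x := Real.sin_pos_of_pos_of_lt_pi
          (lt_trans (by linarith [Real.pi_pos]) hx.1) (lt_trans hx.2 h2)
        rw [(hasDerivAt_E n hsx).deriv]
        have hc : Real.cos x ≤ 0 := Real.cos_nonpos_of_pi_div_two_le_of_le hx.1.le
          (by linarith [hx.2, Real.pi_pos])
        have hd : 0 < 2 * Real.sin x ^ 3 * q n x ^ 2 := by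
          have := q_pos n x; positivity
        exact div_nonpos_of_nonpos_of_nonneg (mul_nonpos_of_nonpos_of_nonneg hc (sq_nonneg _)) hd.le
    exact anti (Set.mem_Icc.mpr ⟨le_refl _, hlt.le⟩)
      (Set.mem_Icc.mpr ⟨hlt.le, le_refl _⟩) hlt.le

lemma v_sq_le_E (n : ℕ) (x : ℝ) : v n x ^ 2 ≤ E n x := by
  unfold E
  have hq := q_pos n x
  have : 0 ≤ v1 n x ^ 2 / q n x := by positivity
  linarith

lemma E_pi_div_two (n : ℕ) :
    E n (Real.pi / 2) = a n ^ 2 + b n ^ 2 / ((n : ℝ) * (n + 1) + 1 / 2) := by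
  have h1 : Real.sin (Real.pi / 2) = 1 := Real.sin_pi_div_two
  have h2 : Real.cos (Real.pi / 2) = 0 := Real.cos_pi_div_two
  unfold E v v1 u u1 q a b
  rw [h1, h2, Real.sqrt_one]
  norm_num
  rw [show (n : ℝ) * (↑n + 1) + 1 / 4 + 1 / 4 = (n : ℝ) * (↑n + 1) + 1 / 2 by ring]

lemma E_lt (n : ℕ) (hn : 1 ≤ n) : E n (Real.pi / 2) < 2 / (π * n) := by
  rw [E_pi_div_two]
  have hpi := Real.pi_pos
  rcases Nat.even_or_odd n with ⟨m, hm⟩ | ⟨m, hm⟩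
  · -- n = 2m, m ≥ 1
    have hm' : n = 2 * m := by omega
    have hm1 : 1 ≤ m := by omega
    obtain ⟨k, hk⟩ : ∃ k, m = k + 1 := ⟨m - 1, by omega⟩
    subst hm'
    have ha : a (2 * m) = (-1) ^ m * c m := a_even m
    have hb : b (2 * m) = 0 := by
      rw [show 2 * m = (2 * k + 1) + 1 by omega, b_succ, show 2 * k + 1 = 2 * k + 1 from rfl,
        a_odd k, mul_zero]
    rw [ha, hb]
    have hsq : ((-1 : ℝ) ^ m * c m) ^ 2 = c m ^ 2 := by
      rw [mul_pow, ← pow_mul, mul_comm m 2, pow_mul]; norm_num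
    rw [hsq]
    have hc := c_sq_lt m
    have h4 : c m ^ 2 * ((m : ℝ) + 1 / 4) * π < 1 := by
      rw [← lt_div_iff₀ hpi]; exact hc
    have h5 : 0 ≤ c m ^ 2 * π := by positivity
    have hm1R : (1 : ℝ) ≤ m := by exact_mod_cast hm1
    rw [lt_div_iff₀ (by positivity)]
    push_cast
    norm_num
    nlinarith [h4, h5]
  · -- n = 2m+1
    subst hm
    have ha : a (2 * m + 1) = 0 := a_odd m
    have hb : b (2 * m + 1) = (((2 * m : ℕ) : ℝ) + 1) * ((-1) ^ m * c m) := by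
      rw [b_succ, a_even]
    rw [ha, hb]
    have hsq : ((((2 * m : ℕ) : ℝ) + 1) * ((-1) ^ m * c m)) ^ 2
        = (2 * (m : ℝ) + 1) ^ 2 * c m ^ 2 := by
      push_cast
      rw [mul_pow, mul_pow, ← pow_mul, mul_comm m 2, pow_mul]
      norm_num
    rw [hsq]
    have hc := c_sq_lt m
    have h4 : c m ^ 2 * ((m : ℝ) + 1 / 4) * π < 1 := by rw [← lt_div_iff₀ hpi]; exact hc
    have h7 : (0:ℝ) < 2 * (m:ℝ) + 1 := by positivity
    have h8 : π * c m ^ 2 * (4 * (m:ℝ) + 1) * (2 * (m:ℝ) + 1) ^ 3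
        < 4 * (2 * (m:ℝ) + 1) ^ 3 := by
      have h6 : π * c m ^ 2 * (4 * (m:ℝ) + 1) < 4 := by nlinarith [h4]
      nlinarith [h6, pow_pos h7 3]
    have hD : (0:ℝ) < ((2*m+1:ℕ):ℝ) * (((2*m+1:ℕ):ℝ) + 1) + 1/2 := by positivity
    have h9 : 4*(2*(m:ℝ)+1)^3
        ≤ 2*((2*(m:ℝ)+1)*((2*(m:ℝ)+1)+1)+1/2)*(4*(m:ℝ)+1) := by
      nlinarith [sq_nonneg (m:ℝ)]
    norm_num
    rw [div_lt_div_iff₀ (by positivity) (by positivity)]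
    nlinarith [h8, h9, show (0:ℝ) < 4*(m:ℝ)+1 by positivity]

lemma v_sq_lt (n : ℕ) (hn : 1 ≤ n) {θ : ℝ} (h1 : 0 < θ) (h2 : θ < Real.pi) :
    v n θ ^ 2 < 2 / (π * n) :=
  lt_of_le_of_lt (le_trans (v_sq_le_E n θ) (E_le n h1 h2)) (E_lt n hn)

end Bern

theorem stmt18 (n : ℕ) (hn : 1 ≤ n) (θ : ℝ) (h0 : 0 ≤ θ) (hπ : θ ≤ Real.pi) :
    Real.sqrt (Real.sin θ) * |P n (Real.cos θ)| < Real.sqrt (2 / (Real.pi * n)) := by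
  have hnR : (0:ℝ) < n := by exact_mod_cast Nat.pos_of_ne_zero (by omega)
  have hpi := Real.pi_pos
  have hR : (0:ℝ) < 2 / (Real.pi * n) := by positivity
  rcases eq_or_lt_of_le h0 with h|h1
  · rw [← h, Real.sin_zero, Real.sqrt_zero, zero_mul]
    exact Real.sqrt_pos.mpr hR
  rcases eq_or_lt_of_le hπ with h|h2
  · rw [h, Real.sin_pi, Real.sqrt_zero, zero_mul]
    exact Real.sqrt_pos.mpr hR
  have key := Bern.v_sq_lt n hn h1 h2
  have hLHS : Real.sqrt (Real.sin θ) * |P n (Real.cos θ)| = |Bern.v n θ| := by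
    rw [Bern.v, Bern.u, ← Bern.P_eq, abs_mul, abs_of_nonneg (Real.sqrt_nonneg _)]
  rw [hLHS]
  rw [show |Bern.v n θ| = Real.sqrt (Bern.v n θ ^ 2) by rw [Real.sqrt_sq_eq_abs]]
  exact Real.sqrt_lt_sqrt (sq_nonneg _) key
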